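/- Let B₁, B₂ ∈ ℝ^{m×n}. Then ‖B₁ᵀ(I + B₁B₁ᵀ)⁻¹B₁ − B₂ᵀ(I + B₂B₂ᵀ)⁻¹B₂‖_F ≤ D · ‖B₁ − B₂‖_F, where D = ‖(I + B₁B₁ᵀ)⁻¹B₁‖ + ‖B₂‖·‖B₁‖·(‖B₁‖ + ‖B₂‖) + ‖(I + B₂B₂ᵀ)⁻¹B₂‖, with ‖·‖ the spectral norm and ‖·‖_F the Frobenius norm. -/

import Mathlib

open Matrix

/-- Frobenius norm of a real matrix. -/
noncomputable def frob {m n : ℕ} (M : Matrix (Fin m) (Fin n) ℝ) : ℝ :=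
  Real.sqrt (∑ i, ∑ j, (M i j) ^ 2)

/-- Spectral (operator) norm of a real matrix, as the operator norm of the induced
linear map between Euclidean spaces. -/
noncomputable def spec {m n : ℕ} (M : Matrix (Fin m) (Fin n) ℝ) : ℝ :=
  ‖LinearMap.toContinuousLinearMap (Matrix.toEuclideanLin M)‖

section Aux

lemma frob_nonneg {m n : ℕ} (M : Matrix (Fin m) (Fin n) ℝ) : 0 ≤ frob M := Real.sqrt_nonneg _
lemma spec_nonneg {m n : ℕ} (M : Matrix (Fin m) (Fin n) ℝ) : 0 ≤ spec M := norm_nonneg _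

lemma frob_transpose {m n : ℕ} (M : Matrix (Fin m) (Fin n) ℝ) : frob Mᵀ = frob M := by
  unfold frob; rw [Finset.sum_comm]; rfl

lemma frob_neg {m n : ℕ} (M : Matrix (Fin m) (Fin n) ℝ) : frob (-M) = frob M := by
  unfold frob; simp

section
attribute [local instance] Matrix.frobeniusNormedAddCommGroup

lemma frob_eq {m n : ℕ} (M : Matrix (Fin m) (Fin n) ℝ) : frob M = ‖M‖ := by
  unfold frob
  rw [Matrix.frobenius_norm_def, Real.sqrt_eq_rpow]
  congr 1
  simp [Real.norm_eq_abs, sq_abs]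

lemma frob_add_le {m n : ℕ} (X Y : Matrix (Fin m) (Fin n) ℝ) :
    frob (X + Y) ≤ frob X + frob Y := by
  rw [frob_eq, frob_eq, frob_eq]; exact norm_add_le X Y
end

section
attribute [local instance] Matrix.instL2OpNormedAddCommGroup

lemma spec_eq {m n : ℕ} (M : Matrix (Fin m) (Fin n) ℝ) : spec M = ‖M‖ := rfl

lemma real_conjTranspose {m n : ℕ} (M : Matrix (Fin m) (Fin n) ℝ) : Mᴴ = Mᵀ := by
  ext i j; simp [conjTranspose_apply]

lemma spec_transpose {m n : ℕ} (M : Matrix (Fin m) (Fin n) ℝ) : spec Mᵀ = spec M := by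
  rw [spec_eq, spec_eq, ← real_conjTranspose, Matrix.l2_opNorm_conjTranspose]

lemma spec_mul_le {m n k : ℕ} (A : Matrix (Fin m) (Fin n) ℝ) (B : Matrix (Fin n) (Fin k) ℝ) :
    spec (A * B) ≤ spec A * spec B := by
  rw [spec_eq, spec_eq, spec_eq]; exact Matrix.l2_opNorm_mul A B
end

lemma frob_mul_le_specl {m n k : ℕ} (A : Matrix (Fin m) (Fin n) ℝ)
    (B : Matrix (Fin n) (Fin k) ℝ) : frob (A * B) ≤ spec A * frob B := by
  have hB : frob B = Real.sqrt (∑ j, ∑ i, (B i j) ^ 2) := by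
    unfold frob; rw [Finset.sum_comm]
  have hAB : frob (A * B) = Real.sqrt (∑ j, ∑ i, ((A * B) i j) ^ 2) := by
    unfold frob; rw [Finset.sum_comm]
  have key : ∀ j, ∑ i, ((A * B) i j) ^ 2 ≤ spec A ^ 2 * ∑ i, (B i j) ^ 2 := by
    intro j
    set v : EuclideanSpace ℝ (Fin n) := (WithLp.equiv 2 (Fin n → ℝ)).symm (fun i => B i j) with hv
    have h1 : ‖v‖ ^ 2 = ∑ i, (B i j) ^ 2 := by
      rw [EuclideanSpace.norm_eq, Real.sq_sqrt (by positivity)]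
      simp [hv, Real.norm_eq_abs, sq_abs]
    have h2 : (LinearMap.toContinuousLinearMap (Matrix.toEuclideanLin A)) v =
        (WithLp.equiv 2 (Fin m → ℝ)).symm (A *ᵥ fun i => B i j) := by
      simp [hv]
    have h3 : ‖(WithLp.equiv 2 (Fin m → ℝ)).symm (A *ᵥ fun i => B i j)‖ ^ 2
        = ∑ i, ((A * B) i j) ^ 2 := by
      rw [EuclideanSpace.norm_eq, Real.sq_sqrt (by positivity)]
      congr 1; ext i
      simp [Real.norm_eq_abs, sq_abs, Matrix.mul_apply, Matrix.mulVec, dotProduct]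
    have h4 := (LinearMap.toContinuousLinearMap (Matrix.toEuclideanLin A)).le_opNorm v
    rw [h2] at h4
    have h5 : ‖(WithLp.equiv 2 (Fin m → ℝ)).symm (A *ᵥ fun i => B i j)‖ ^ 2
        ≤ (spec A * ‖v‖) ^ 2 := by
      apply pow_le_pow_left₀ (norm_nonneg _) h4
    rw [h3] at h5
    calc ∑ i, ((A * B) i j) ^ 2 ≤ (spec A * ‖v‖) ^ 2 := h5
      _ = spec A ^ 2 * ∑ i, (B i j) ^ 2 := by rw [mul_pow, h1]
  rw [hAB, hB]
  calc Real.sqrt (∑ j, ∑ i, ((A * B) i j) ^ 2)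
      ≤ Real.sqrt (spec A ^ 2 * ∑ j, ∑ i, (B i j) ^ 2) := by
        apply Real.sqrt_le_sqrt
        rw [Finset.mul_sum]
        exact Finset.sum_le_sum fun j _ => key j
    _ = spec A * Real.sqrt (∑ j, ∑ i, (B i j) ^ 2) := by
        rw [Real.sqrt_mul (sq_nonneg _), Real.sqrt_sq (spec_nonneg A)]

lemma frob_mul_le_specr {m n k : ℕ} (A : Matrix (Fin m) (Fin n) ℝ)
    (B : Matrix (Fin n) (Fin k) ℝ) : frob (A * B) ≤ frob A * spec B := by
  calc frob (A * B) = frob ((A * B)ᵀ) := (frob_transpose _).symm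
    _ = frob (Bᵀ * Aᵀ) := by rw [Matrix.transpose_mul]
    _ ≤ spec Bᵀ * frob Aᵀ := frob_mul_le_specl _ _
    _ = frob A * spec B := by rw [spec_transpose, frob_transpose]; ring

open scoped RealInnerProductSpace in
lemma spec_inv_le_one {m n : ℕ} (B : Matrix (Fin m) (Fin n) ℝ) :
    spec ((1 : Matrix (Fin m) (Fin m) ℝ) + B * Bᵀ)⁻¹ ≤ 1 := by
  set M : Matrix (Fin m) (Fin m) ℝ := 1 + B * Bᵀ with hMdef
  have hBBt : (B * Bᵀ).PosSemidef := by
    have h := Matrix.posSemidef_self_mul_conjTranspose B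
    have : Bᴴ = Bᵀ := by ext i j; simp [conjTranspose_apply]
    rwa [this] at h
  have hM : M.PosDef := Matrix.PosDef.one.add_posSemidef hBBt
  have hdet : IsUnit M.det := hM.det_pos.ne'.isUnit
  have hlow : ∀ x : EuclideanSpace ℝ (Fin m), ‖x‖ ≤ ‖Matrix.toEuclideanLin M x‖ := by
    intro x
    rcases eq_or_ne x 0 with h | h
    · simp [h]
    have hx : 0 < ‖x‖ := norm_pos_iff.mpr h
    have hinner : ‖x‖ ^ 2 ≤ (inner ℝ x (Matrix.toEuclideanLin M x) : ℝ) := by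
      have h1 : (inner ℝ x (Matrix.toEuclideanLin M x) : ℝ)
          = dotProduct (WithLp.equiv 2 (Fin m → ℝ) x) (M *ᵥ WithLp.equiv 2 (Fin m → ℝ) x) := by
        rw [PiLp.inner_apply]
        simp [Matrix.toEuclideanLin_apply, dotProduct, mul_comm]
      have h2 : dotProduct (WithLp.equiv 2 (Fin m → ℝ) x) (M *ᵥ WithLp.equiv 2 (Fin m → ℝ) x)
          = dotProduct (WithLp.equiv 2 (Fin m → ℝ) x) (WithLp.equiv 2 (Fin m → ℝ) x)
            + dotProduct (WithLp.equiv 2 (Fin m → ℝ) x) ((B * Bᵀ) *ᵥ WithLp.equiv 2 (Fin m → ℝ) x) := by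
        rw [hMdef, Matrix.add_mulVec, dotProduct_add, Matrix.one_mulVec]
      have h3 : 0 ≤ dotProduct (WithLp.equiv 2 (Fin m → ℝ) x) ((B * Bᵀ) *ᵥ WithLp.equiv 2 (Fin m → ℝ) x) := by
        have := hBBt.dotProduct_mulVec_nonneg (WithLp.equiv 2 (Fin m → ℝ) x)
        simpa using this
      have h4 : ‖x‖ ^ 2 = dotProduct (WithLp.equiv 2 (Fin m → ℝ) x) (WithLp.equiv 2 (Fin m → ℝ) x) := by
        rw [EuclideanSpace.norm_eq, Real.sq_sqrt (by positivity)]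
        simp [dotProduct, Real.norm_eq_abs, sq_abs, pow_two]
      rw [h1, h2, ← h4]
      linarith
    have hcs : (inner ℝ x (Matrix.toEuclideanLin M x) : ℝ)
        ≤ ‖x‖ * ‖Matrix.toEuclideanLin M x‖ := real_inner_le_norm _ _
    nlinarith [norm_nonneg (Matrix.toEuclideanLin M x)]
  have hcomp : ∀ y : EuclideanSpace ℝ (Fin m),
      Matrix.toEuclideanLin M (Matrix.toEuclideanLin M⁻¹ y) = y := by
    intro y
    apply (WithLp.equiv 2 (Fin m → ℝ)).injective
    simp [Matrix.ofLp_toEuclideanLin_apply, Matrix.mulVec_mulVec,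
      Matrix.mul_nonsing_inv _ hdet]
  unfold spec
  apply ContinuousLinearMap.opNorm_le_bound _ zero_le_one
  intro y
  rw [one_mul]
  calc ‖(LinearMap.toContinuousLinearMap (Matrix.toEuclideanLin M⁻¹)) y‖
      = ‖Matrix.toEuclideanLin M⁻¹ y‖ := rfl
    _ ≤ ‖Matrix.toEuclideanLin M (Matrix.toEuclideanLin M⁻¹ y)‖ := hlow _
    _ = ‖y‖ := by rw [hcomp]

lemma one_add_det_isUnit {m n : ℕ} (B : Matrix (Fin m) (Fin n) ℝ) :
    IsUnit ((1 : Matrix (Fin m) (Fin m) ℝ) + B * Bᵀ).det := by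
  have hBBt : (B * Bᵀ).PosSemidef := by
    have h := Matrix.posSemidef_self_mul_conjTranspose B
    have : Bᴴ = Bᵀ := by ext i j; simp [conjTranspose_apply]
    rwa [this] at h
  exact (Matrix.PosDef.one.add_posSemidef hBBt).det_pos.ne'.isUnit

end Aux

theorem hessian_sqrt_perturbation_bound {m n : ℕ} (B₁ B₂ : Matrix (Fin m) (Fin n) ℝ) :
    frob (B₁ᵀ * ((1 : Matrix (Fin m) (Fin m) ℝ) + B₁ * B₁ᵀ)⁻¹ * B₁ -
        B₂ᵀ * ((1 : Matrix (Fin m) (Fin m) ℝ) + B₂ * B₂ᵀ)⁻¹ * B₂) ≤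
      (spec (((1 : Matrix (Fin m) (Fin m) ℝ) + B₁ * B₁ᵀ)⁻¹ * B₁) +
          spec B₂ * spec B₁ * (spec B₁ + spec B₂) +
          spec (((1 : Matrix (Fin m) (Fin m) ℝ) + B₂ * B₂ᵀ)⁻¹ * B₂)) *
        frob (B₁ - B₂) := by
  set A₁ : Matrix (Fin m) (Fin m) ℝ := ((1 : Matrix (Fin m) (Fin m) ℝ) + B₁ * B₁ᵀ)⁻¹ with hA₁def
  set A₂ : Matrix (Fin m) (Fin m) ℝ := ((1 : Matrix (Fin m) (Fin m) ℝ) + B₂ * B₂ᵀ)⁻¹ with hA₂def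
  have hA₁ : A₁ * ((1 : Matrix (Fin m) (Fin m) ℝ) + B₁ * B₁ᵀ) = 1 :=
    Matrix.nonsing_inv_mul _ (one_add_det_isUnit B₁)
  have hA₂ : ((1 : Matrix (Fin m) (Fin m) ℝ) + B₂ * B₂ᵀ) * A₂ = 1 :=
    Matrix.mul_nonsing_inv _ (one_add_det_isUnit B₂)
  set d : ℝ := frob (B₁ - B₂) with hd
  have hdnn : 0 ≤ d := frob_nonneg _
  set mid : Matrix (Fin m) (Fin m) ℝ := B₂ * B₂ᵀ - B₁ * B₁ᵀ with hmid
  -- key resolvent identity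
  have key : A₁ * (mid * A₂) = A₁ - A₂ := by
    have h1 : mid = ((1 : Matrix (Fin m) (Fin m) ℝ) + B₂ * B₂ᵀ)
        - ((1 : Matrix (Fin m) (Fin m) ℝ) + B₁ * B₁ᵀ) := by
      rw [hmid]; noncomm_ring
    rw [h1, Matrix.sub_mul, Matrix.mul_sub, hA₂, ← Matrix.mul_assoc, hA₁, mul_one, one_mul]
  -- decomposition
  have decomp : B₁ᵀ * A₁ * B₁ - B₂ᵀ * A₂ * B₂ =
      (B₁ - B₂)ᵀ * (A₁ * B₁) + B₂ᵀ * ((A₁ * (mid * A₂)) * B₁) + (B₂ᵀ * A₂) * (B₁ - B₂) := by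
    rw [key, Matrix.transpose_sub]
    simp only [Matrix.sub_mul, Matrix.mul_sub, Matrix.mul_assoc]
    abel
  -- splitting of mid
  have midsplit : mid = B₂ * (B₂ - B₁)ᵀ + (B₂ - B₁) * B₁ᵀ := by
    rw [hmid, Matrix.transpose_sub]
    simp only [Matrix.sub_mul, Matrix.mul_sub]
    abel
  have hfrobswap : frob (B₂ - B₁) = d := by
    rw [hd, ← frob_neg (B₂ - B₁), neg_sub]
  have hmidbound : frob mid ≤ (spec B₂ + spec B₁) * d := by
    rw [midsplit]
    calc frob (B₂ * (B₂ - B₁)ᵀ + (B₂ - B₁) * B₁ᵀ)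
        ≤ frob (B₂ * (B₂ - B₁)ᵀ) + frob ((B₂ - B₁) * B₁ᵀ) := frob_add_le _ _
      _ ≤ spec B₂ * frob ((B₂ - B₁)ᵀ) + frob (B₂ - B₁) * spec B₁ᵀ := by
          exact add_le_add (frob_mul_le_specl _ _) (frob_mul_le_specr _ _)
      _ = (spec B₂ + spec B₁) * d := by
          rw [frob_transpose, spec_transpose, hfrobswap]; ring
  -- symmetry of A₂
  have hA₂sym : A₂ᵀ = A₂ := by
    rw [hA₂def, Matrix.transpose_nonsing_inv, Matrix.transpose_add, Matrix.transpose_one,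
      Matrix.transpose_mul, Matrix.transpose_transpose]
  -- term bounds
  have hT1 : frob ((B₁ - B₂)ᵀ * (A₁ * B₁)) ≤ spec (A₁ * B₁) * d := by
    calc frob ((B₁ - B₂)ᵀ * (A₁ * B₁)) ≤ frob ((B₁ - B₂)ᵀ) * spec (A₁ * B₁) :=
        frob_mul_le_specr _ _
      _ = spec (A₁ * B₁) * d := by rw [frob_transpose]; ring
  have hT3 : frob ((B₂ᵀ * A₂) * (B₁ - B₂)) ≤ spec (A₂ * B₂) * d := by
    have hspec : spec (B₂ᵀ * A₂) = spec (A₂ * B₂) := by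
      rw [← spec_transpose (B₂ᵀ * A₂), Matrix.transpose_mul, Matrix.transpose_transpose, hA₂sym]
    calc frob ((B₂ᵀ * A₂) * (B₁ - B₂)) ≤ spec (B₂ᵀ * A₂) * frob (B₁ - B₂) :=
        frob_mul_le_specl _ _
      _ = spec (A₂ * B₂) * d := by rw [hspec]
  have hA₁le : spec A₁ ≤ 1 := spec_inv_le_one B₁
  have hA₂le : spec A₂ ≤ 1 := spec_inv_le_one B₂
  have hT2 : frob (B₂ᵀ * ((A₁ * (mid * A₂)) * B₁)) ≤
      spec B₂ * spec B₁ * (spec B₁ + spec B₂) * d := by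
    have e1 : B₂ᵀ * ((A₁ * (mid * A₂)) * B₁) = B₂ᵀ * (A₁ * (mid * (A₂ * B₁))) := by
      rw [Matrix.mul_assoc, Matrix.mul_assoc]
    rw [e1]
    have s1 : frob (B₂ᵀ * (A₁ * (mid * (A₂ * B₁)))) ≤ spec B₂ * frob (A₁ * (mid * (A₂ * B₁))) := by
      have := frob_mul_le_specl (B₂ᵀ) (A₁ * (mid * (A₂ * B₁)))
      rwa [spec_transpose] at this
    have s2 : frob (A₁ * (mid * (A₂ * B₁))) ≤ spec A₁ * frob (mid * (A₂ * B₁)) :=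
      frob_mul_le_specl _ _
    have s3 : frob (mid * (A₂ * B₁)) ≤ frob mid * spec (A₂ * B₁) := frob_mul_le_specr _ _
    have s4 : spec (A₂ * B₁) ≤ spec B₁ := by
      calc spec (A₂ * B₁) ≤ spec A₂ * spec B₁ := spec_mul_le _ _
        _ ≤ 1 * spec B₁ := mul_le_mul_of_nonneg_right hA₂le (spec_nonneg _)
        _ = spec B₁ := one_mul _
    have s5 : frob (mid * (A₂ * B₁)) ≤ ((spec B₂ + spec B₁) * d) * spec B₁ := by
      calc frob (mid * (A₂ * B₁)) ≤ frob mid * spec (A₂ * B₁) := s3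
        _ ≤ ((spec B₂ + spec B₁) * d) * spec B₁ :=
          mul_le_mul hmidbound s4 (spec_nonneg _)
            (mul_nonneg (add_nonneg (spec_nonneg _) (spec_nonneg _)) hdnn)
    have s6 : frob (A₁ * (mid * (A₂ * B₁))) ≤ ((spec B₂ + spec B₁) * d) * spec B₁ := by
      calc frob (A₁ * (mid * (A₂ * B₁))) ≤ spec A₁ * frob (mid * (A₂ * B₁)) := s2
        _ ≤ 1 * (((spec B₂ + spec B₁) * d) * spec B₁) :=
          mul_le_mul hA₁le s5 (frob_nonneg _) zero_le_one
        _ = ((spec B₂ + spec B₁) * d) * spec B₁ := one_mul _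
    calc frob (B₂ᵀ * (A₁ * (mid * (A₂ * B₁))))
        ≤ spec B₂ * frob (A₁ * (mid * (A₂ * B₁))) := s1
      _ ≤ spec B₂ * (((spec B₂ + spec B₁) * d) * spec B₁) :=
          mul_le_mul_of_nonneg_left s6 (spec_nonneg _)
      _ = spec B₂ * spec B₁ * (spec B₁ + spec B₂) * d := by ring
  -- combine
  rw [decomp]
  have tri : frob ((B₁ - B₂)ᵀ * (A₁ * B₁) + B₂ᵀ * ((A₁ * (mid * A₂)) * B₁)
        + (B₂ᵀ * A₂) * (B₁ - B₂))
      ≤ frob ((B₁ - B₂)ᵀ * (A₁ * B₁)) + frob (B₂ᵀ * ((A₁ * (mid * A₂)) * B₁))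
        + frob ((B₂ᵀ * A₂) * (B₁ - B₂)) := by
    calc frob ((B₁ - B₂)ᵀ * (A₁ * B₁) + B₂ᵀ * ((A₁ * (mid * A₂)) * B₁)
          + (B₂ᵀ * A₂) * (B₁ - B₂))
        ≤ frob ((B₁ - B₂)ᵀ * (A₁ * B₁) + B₂ᵀ * ((A₁ * (mid * A₂)) * B₁))
          + frob ((B₂ᵀ * A₂) * (B₁ - B₂)) := frob_add_le _ _
      _ ≤ frob ((B₁ - B₂)ᵀ * (A₁ * B₁)) + frob (B₂ᵀ * ((A₁ * (mid * A₂)) * B₁))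
          + frob ((B₂ᵀ * A₂) * (B₁ - B₂)) := by
          have := frob_add_le ((B₁ - B₂)ᵀ * (A₁ * B₁)) (B₂ᵀ * ((A₁ * (mid * A₂)) * B₁))
          linarith
  calc frob ((B₁ - B₂)ᵀ * (A₁ * B₁) + B₂ᵀ * ((A₁ * (mid * A₂)) * B₁)
        + (B₂ᵀ * A₂) * (B₁ - B₂))
      ≤ frob ((B₁ - B₂)ᵀ * (A₁ * B₁)) + frob (B₂ᵀ * ((A₁ * (mid * A₂)) * B₁))
        + frob ((B₂ᵀ * A₂) * (B₁ - B₂)) := tri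
    _ ≤ spec (A₁ * B₁) * d + spec B₂ * spec B₁ * (spec B₁ + spec B₂) * d
        + spec (A₂ * B₂) * d := by linarith
    _ = (spec (A₁ * B₁) + spec B₂ * spec B₁ * (spec B₁ + spec B₂) + spec (A₂ * B₂)) * d := by
        ring
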